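/- Let f ∈ ℂ⟨X₁,…,Xₙ⟩. Then f is cyclically equivalent to 0, i.e. f lies in the ℂ-linear span of the commutators {pq − qp : p, q ∈ ℂ⟨X₁,…,Xₙ⟩}, if and only if for every s ≥ 1 and every tuple A₁, …, Aₙ ∈ M_s(ℂ) of self-adjoint matrices, the evaluation of f at (A₁,…,Aₙ) has trace zero: trace(f(A₁,…,Aₙ)) = 0. -/

import Mathlib

open Polynomial Matrix Finset
open Fin.NatCast Fin.CommRing

namespace Stmt15

variable {n : ℕ}

/-- Evaluation of an element of the monoid algebra on the free monoid at a tuple of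
elements of a `ℂ`-algebra. -/
noncomputable def ev {M : Type} [Ring M] [Algebra ℂ M] (A : Fin n → M) :
    MonoidAlgebra ℂ (FreeMonoid (Fin n)) →ₐ[ℂ] M :=
  (MonoidAlgebra.lift ℂ M (FreeMonoid (Fin n))) (FreeMonoid.lift A)

lemma ev_comp {M N : Type} [Ring M] [Algebra ℂ M] [Ring N] [Algebra ℂ N]
    (φ : M →ₐ[ℂ] N) (A : Fin n → M) :
    φ.comp (ev A) = ev (fun i => φ (A i)) := by
  have h : ((φ : M →+* N) : M →* N).comp (FreeMonoid.lift A)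
      = FreeMonoid.lift (fun i => φ (A i)) := by
    apply FreeMonoid.hom_eq
    intro i
    simp
  apply MonoidAlgebra.algHom_ext
  intro w
  simp only [AlgHom.comp_apply, ev, MonoidAlgebra.lift_single, one_smul]
  calc φ (FreeMonoid.lift A w)
      = (((φ : M →+* N) : M →* N).comp (FreeMonoid.lift A)) w := rfl
    _ = FreeMonoid.lift (fun i => φ (A i)) w := by rw [h]
  exact Subsingleton.elim _ _

lemma ev_bridge {M : Type} [Ring M] [Algebra ℂ M] (A : Fin n → M)
    (f : FreeAlgebra ℂ (Fin n)) :
    ev A (((FreeAlgebra.equivMonoidAlgebraFreeMonoid (R := ℂ) (X := Fin n))) f) = FreeAlgebra.lift ℂ A f := by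
  have h : (ev A).comp
      (FreeAlgebra.equivMonoidAlgebraFreeMonoid (R := ℂ) (X := Fin n)).toAlgHom
      = FreeAlgebra.lift ℂ A := by
    apply FreeAlgebra.hom_ext
    funext x
    simp [ev, FreeAlgebra.equivMonoidAlgebraFreeMonoid]
  exact DFunLike.congr_fun h f

lemma rotate_single_mem (l : List (Fin n)) (k : ℕ) (a : ℂ) :
    MonoidAlgebra.single (FreeMonoid.ofList (l.rotate k)) a
      - MonoidAlgebra.single (FreeMonoid.ofList l) a
      ∈ Submodule.span ℂ
        {x : MonoidAlgebra ℂ (FreeMonoid (Fin n)) | ∃ p q, x = p * q - q * p} := by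
  rcases eq_or_ne l [] with rfl | hl
  · simp
  · have hd : 0 < l.length := List.length_pos_iff.2 hl
    have hk : k % l.length ≤ l.length := (Nat.mod_lt _ hd).le
    have h1 : l.rotate k = l.drop (k % l.length) ++ l.take (k % l.length) := by
      rw [← List.rotate_mod, List.rotate_eq_drop_append_take hk]
    have h2 : l = l.take (k % l.length) ++ l.drop (k % l.length) :=
      (List.take_append_drop _ l).symm
    apply Submodule.subset_span
    refine ⟨MonoidAlgebra.single (FreeMonoid.ofList (l.drop (k % l.length))) a,
      MonoidAlgebra.single (FreeMonoid.ofList (l.take (k % l.length))) 1, ?_⟩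
    rw [MonoidAlgebra.single_mul_single, MonoidAlgebra.single_mul_single, mul_one, one_mul]
    have h3 : FreeMonoid.ofList (l.drop (k % l.length)) * FreeMonoid.ofList (l.take (k % l.length))
        = FreeMonoid.ofList (l.rotate k) := by
      rw [h1]; rfl
    have h4 : FreeMonoid.ofList (l.take (k % l.length)) * FreeMonoid.ofList (l.drop (k % l.length))
        = FreeMonoid.ofList l := by
      conv_rhs => rw [h2]
      rfl
    rw [h3, h4]

lemma rotsum_rotate (φ : List (Fin n) → ℂ) (l : List (Fin n)) (hl : l ≠ []) (j : ℕ) :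
    ∑ k ∈ Finset.range l.length, φ ((l.rotate j).rotate k)
      = ∑ k ∈ Finset.range l.length, φ (l.rotate k) := by
  haveI : NeZero l.length := ⟨fun h0 => hl (List.length_eq_zero_iff.1 h0)⟩
  rw [← Fin.sum_univ_eq_sum_range (fun k => φ ((l.rotate j).rotate k)),
    ← Fin.sum_univ_eq_sum_range (fun k => φ (l.rotate k))]
  have key : ∀ k : Fin l.length, φ ((l.rotate j).rotate k.val)
      = φ (l.rotate (((j : Fin l.length) + k).val)) := by
    intro k
    rw [List.rotate_rotate]
    have hval : (((j : Fin l.length)) + k).val = (j + k.val) % l.length := by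
      simp [Fin.add_def, Fin.val_natCast, Nat.mod_add_mod]
    rw [hval, List.rotate_mod]
  rw [Finset.sum_congr rfl (fun k _ => key k)]
  exact Fintype.sum_equiv (Equiv.addLeft ((j : Fin l.length))) _ _ (fun k => rfl)

open scoped Classical in
lemma key_count (u : List (Fin n)) (hu : u ≠ []) (x : List (Fin n)) (j : ℕ) :
    ∑ k ∈ Finset.range u.length, (if u.rotate k = x.rotate j then (1 : ℂ) else 0)
      = ∑ k ∈ Finset.range u.length, (if u.rotate k = x then (1 : ℂ) else 0) := by
  have h1 := rotsum_rotate (fun y => if y = x.rotate j then (1 : ℂ) else 0) u hu j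
  rw [← h1]
  refine Finset.sum_congr rfl fun k _ => ?_
  rw [List.rotate_rotate, Nat.add_comm, ← List.rotate_rotate]
  exact if_congr ⟨fun h => List.rotate_injective j h, fun h => by rw [h]⟩ rfl rfl

theorem mem_span_comm (g : MonoidAlgebra ℂ (FreeMonoid (Fin n)))
    (h0 : g.coeff (FreeMonoid.ofList []) = 0)
    (hR : ∀ l : List (Fin n), l ≠ [] →
      ∑ k ∈ Finset.range l.length, g.coeff (FreeMonoid.ofList (l.rotate k)) = 0) :
    g ∈ Submodule.span ℂ
      {x : MonoidAlgebra ℂ (FreeMonoid (Fin n)) | ∃ p q, x = p * q - q * p} := by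
  classical
  suffices Hmain : ∀ m : ℕ, ∀ g : MonoidAlgebra ℂ (FreeMonoid (Fin n)), g.coeff.support.card = m →
      g.coeff (FreeMonoid.ofList []) = 0 →
      (∀ l : List (Fin n), l ≠ [] →
        ∑ k ∈ Finset.range l.length, g.coeff (FreeMonoid.ofList (l.rotate k)) = 0) →
      g ∈ Submodule.span ℂ
        {x : MonoidAlgebra ℂ (FreeMonoid (Fin n)) | ∃ p q, x = p * q - q * p} by
    exact Hmain _ g rfl h0 hR
  clear h0 hR g
  intro m
  induction m using Nat.strong_induction_on with
  | _ m ih =>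
  intro g hcard h0 hR
  rcases eq_or_ne g 0 with rfl | hg
  · exact Submodule.zero_mem _
  obtain ⟨w, hw⟩ := Finsupp.support_nonempty_iff.2 (mt MonoidAlgebra.coeff_eq_zero.1 hg)
  set l := FreeMonoid.toList w with hlw
  have hwl : w = FreeMonoid.ofList l := (FreeMonoid.ofList_toList w).symm
  have hlne : l ≠ [] := by
    intro hc
    apply Finsupp.mem_support_iff.1 hw
    rw [hwl, hc]
    exact h0
  haveI : NeZero l.length := ⟨fun hz => hlne (List.length_eq_zero_iff.1 hz)⟩
  set C : Finset (FreeMonoid (Fin n)) :=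
    (Finset.range l.length).image (fun k => FreeMonoid.ofList (l.rotate k)) with hC
  have hwC : w ∈ C := by
    rw [hC]
    refine Finset.mem_image.2 ⟨0, Finset.mem_range.2 (Nat.pos_of_ne_zero (NeZero.ne _)), ?_⟩
    rw [List.rotate_zero, hwl]
  have hCne : ∀ v ∈ C, v ≠ FreeMonoid.ofList [] := by
    intro v hv
    obtain ⟨k, _, rfl⟩ := Finset.mem_image.1 hv
    intro hc
    apply hlne
    have : l.rotate k = [] := FreeMonoid.ofList.injective hc
    have := congrArg List.length this
    rw [List.length_rotate] at this
    exact List.length_eq_zero_iff.1 this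
  set Δ : MonoidAlgebra ℂ (FreeMonoid (Fin n)) :=
    ∑ v ∈ C.erase w, g.coeff v • (MonoidAlgebra.single v 1 - MonoidAlgebra.single w 1) with hΔ
  set g' := g - Δ with hg'
  have hΔmem : Δ ∈ Submodule.span ℂ
      {x : MonoidAlgebra ℂ (FreeMonoid (Fin n)) | ∃ p q, x = p * q - q * p} := by
    refine Submodule.sum_mem _ fun v hv => Submodule.smul_mem _ _ ?_
    obtain ⟨k, _, rfl⟩ := Finset.mem_image.1 (Finset.mem_of_mem_erase hv)
    rw [hwl]
    exact rotate_single_mem l k 1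
  -- pointwise description of Δ
  have hΔap : ∀ x, Δ.coeff x = ∑ v ∈ C.erase w,
      g.coeff v * ((if x = v then (1:ℂ) else 0) - (if x = w then (1:ℂ) else 0)) := by
    intro x
    rw [hΔ, MonoidAlgebra.coeff_sum, Finset.sum_apply']
    refine Finset.sum_congr rfl fun v hv => ?_
    rw [MonoidAlgebra.coeff_smul, MonoidAlgebra.coeff_sub, Finsupp.smul_apply, Finsupp.sub_apply, smul_eq_mul]
    congr 2
    · rw [MonoidAlgebra.coeff_single, Finsupp.single_apply]
      exact if_congr eq_comm rfl rfl
    · rw [MonoidAlgebra.coeff_single, Finsupp.single_apply]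
      exact if_congr eq_comm rfl rfl
  -- values of g'
  have hg'erase : ∀ v ∈ C.erase w, g'.coeff v = 0 := by
    intro v hv
    have hvw : v ≠ w := Finset.ne_of_mem_erase hv
    rw [hg', MonoidAlgebra.coeff_sub, Finsupp.sub_apply, hΔap]
    rw [Finset.sum_eq_single v]
    · rw [if_pos rfl, if_neg hvw, sub_zero, mul_one, sub_self]
    · intro b hb hbv
      rw [if_neg (fun hc => hbv hc.symm), if_neg hvw, sub_zero, mul_zero]
    · intro hvnot
      exact absurd hv hvnot
  have hg'out : ∀ x, x ∉ C → g'.coeff x = g.coeff x := by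
    intro x hx
    rw [hg', MonoidAlgebra.coeff_sub, Finsupp.sub_apply, hΔap]
    rw [Finset.sum_eq_zero, sub_zero]
    intro v hv
    rw [if_neg (fun hc => hx (by rw [hc]; exact Finset.mem_of_mem_erase hv)),
      if_neg (fun hc => hx (by rw [hc]; exact hwC)), sub_zero, mul_zero]
  -- rotation sums of g'
  have hR' : ∀ u : List (Fin n), u ≠ [] →
      ∑ k ∈ Finset.range u.length, g'.coeff (FreeMonoid.ofList (u.rotate k)) = 0 := by
    intro u hu
    rw [hg']
    have expand : ∑ k ∈ Finset.range u.length,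
        (g - Δ).coeff (FreeMonoid.ofList (u.rotate k))
        = (∑ k ∈ Finset.range u.length, g.coeff (FreeMonoid.ofList (u.rotate k)))
          - ∑ k ∈ Finset.range u.length, Δ.coeff (FreeMonoid.ofList (u.rotate k)) := by
      rw [← Finset.sum_sub_distrib]
      exact Finset.sum_congr rfl fun k _ => by rw [MonoidAlgebra.coeff_sub, Finsupp.sub_apply]
    rw [expand, hR u hu]
    have hΔ0 : ∑ k ∈ Finset.range u.length, Δ.coeff (FreeMonoid.ofList (u.rotate k)) = 0 := by
      have swap : ∑ k ∈ Finset.range u.length, Δ.coeff (FreeMonoid.ofList (u.rotate k))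
          = ∑ v ∈ C.erase w, g.coeff v *
              ((∑ k ∈ Finset.range u.length, (if u.rotate k = FreeMonoid.toList v then (1:ℂ) else 0))
               - (∑ k ∈ Finset.range u.length, (if u.rotate k = l then (1:ℂ) else 0))) := by
        rw [Finset.sum_congr rfl fun k _ => hΔap (FreeMonoid.ofList (u.rotate k))]
        rw [Finset.sum_comm]
        refine Finset.sum_congr rfl fun v hv => ?_
        rw [← Finset.mul_sum, Finset.sum_sub_distrib]
        congr 2
        · refine Finset.sum_congr rfl fun k _ => ?_
          refine if_congr ?_ rfl rfl
          constructor
          · intro hc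
            rw [← hc]
            rfl
          · intro hc
            rw [← FreeMonoid.ofList_toList v, ← hc]
        · refine Finset.sum_congr rfl fun k _ => ?_
          refine if_congr ?_ rfl rfl
          rw [hwl]
          exact ⟨fun hc => FreeMonoid.ofList.injective hc, fun hc => by rw [hc]⟩
      rw [swap]
      refine Finset.sum_eq_zero fun v hv => ?_
      obtain ⟨k, _, rfl⟩ := Finset.mem_image.1 (Finset.mem_of_mem_erase hv)
      rw [FreeMonoid.toList_ofList, key_count u hu l k, sub_self, mul_zero]
    rw [hΔ0, sub_zero]
  -- g' vanishes on the empty word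
  have h0' : g'.coeff (FreeMonoid.ofList []) = 0 := by
    rw [hg'out _ (fun hc => hCne _ hc rfl), h0]
  -- now deduce g'.coeff w = 0 from the rotation sum at l
  have hg'w : g'.coeff w = 0 := by
    have h1 := hR' l hlne
    have h2 : ∀ k ∈ Finset.range l.length, g'.coeff (FreeMonoid.ofList (l.rotate k))
        = if FreeMonoid.ofList (l.rotate k) = w then g'.coeff w else 0 := by
      intro k hk
      by_cases hc : FreeMonoid.ofList (l.rotate k) = w
      · rw [if_pos hc, hc]
      · rw [if_neg hc]
        refine hg'erase _ (Finset.mem_erase.2 ⟨hc, ?_⟩)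
        exact Finset.mem_image.2 ⟨k, hk, rfl⟩
    rw [Finset.sum_congr rfl h2, Finset.sum_ite, Finset.sum_const, Finset.sum_const_zero,
      add_zero] at h1
    have hkmem : (0 : ℕ) ∈ (Finset.range l.length).filter
        (fun k => FreeMonoid.ofList (l.rotate k) = w) := by
      refine Finset.mem_filter.2 ⟨Finset.mem_range.2 (Nat.pos_of_ne_zero (NeZero.ne _)), ?_⟩
      rw [List.rotate_zero, ← hwl]
    have hcardpos : 0 < ((Finset.range l.length).filter
        (fun k => FreeMonoid.ofList (l.rotate k) = w)).card :=
      Finset.card_pos.2 ⟨0, hkmem⟩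
    rw [nsmul_eq_mul] at h1
    rcases mul_eq_zero.1 h1 with hc | hc
    · exact absurd hc (by exact_mod_cast hcardpos.ne')
    · exact hc
  -- support of g' strictly smaller
  have hsub : g'.coeff.support ⊆ g.coeff.support.erase w := by
    intro x hx
    rw [Finsupp.mem_support_iff] at hx
    by_cases hxC : x ∈ C
    · rcases eq_or_ne x w with rfl | hxw
      · exact absurd hg'w hx
      · exact absurd (hg'erase x (Finset.mem_erase.2 ⟨hxw, hxC⟩)) hx
    · refine Finset.mem_erase.2 ⟨fun hc => hxC (by rw [hc]; exact hwC), ?_⟩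
      rw [Finsupp.mem_support_iff, ← hg'out x hxC]
      exact hx
  have hlt : g'.coeff.support.card < m := by
    rw [← hcard]
    exact lt_of_le_of_lt (Finset.card_le_card hsub) (Finset.card_erase_lt_of_mem hw)
  have hg'mem := ih _ hlt g' rfl h0' hR'
  have hsplit : g = g' + Δ := by
    rw [hg', sub_add_cancel]
  rw [hsplit]
  exact Submodule.add_mem _ hg'mem hΔmem

lemma trace_map {s : ℕ} {R S : Type} [Semiring R] [Semiring S] (φ : R →+* S)
    (M : Matrix (Fin s) (Fin s) R) : (M.map φ).trace = φ M.trace := by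
  simp [Matrix.trace, Matrix.diag, map_sum, Matrix.map_apply]

theorem herm_to_all (g : MonoidAlgebra ℂ (FreeMonoid (Fin n)))
    (H : ∀ s : ℕ, 1 ≤ s → ∀ A : Fin n → Matrix (Fin s) (Fin s) ℂ,
      (∀ i, star (A i) = A i) → Matrix.trace (ev A g) = 0) :
    ∀ s : ℕ, 1 ≤ s → ∀ A : Fin n → Matrix (Fin s) (Fin s) ℂ, Matrix.trace (ev A g) = 0 := by
  suffices hP : ∀ j : ℕ, ∀ s : ℕ, 1 ≤ s → ∀ A : Fin n → Matrix (Fin s) (Fin s) ℂ,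
      (∀ i : Fin n, j ≤ (i : ℕ) → star (A i) = A i) → Matrix.trace (ev A g) = 0 by
    intro s hs A
    exact hP n s hs A (fun i hi => ((Nat.not_lt.2 hi) i.isLt).elim)
  intro j
  induction j with
  | zero => exact fun s hs A hA => H s hs A (fun i => hA i (Nat.zero_le _))
  | succ j ih =>
    intro s hs A hA
    by_cases hj : j < n
    case neg =>
      refine ih s hs A (fun i hji => hA i ?_)
      have : (i : ℕ) < n := i.isLt
      omega
    case pos =>
    set jj : Fin n := ⟨j, hj⟩ with hjj
    set M := A jj with hM
    set H0 : Matrix (Fin s) (Fin s) ℂ := (2⁻¹ : ℂ) • (M + star M) with hH0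
    set K : Matrix (Fin s) (Fin s) ℂ := ((2⁻¹ : ℂ) * Complex.I) • (star M - M) with hK
    have hstar2 : star ((2 : ℂ)⁻¹) = (2 : ℂ)⁻¹ := by
      simp [Complex.star_def, map_inv₀]
    have hH0star : star H0 = H0 := by
      rw [hH0, star_smul, star_add, star_star, hstar2, add_comm]
    have hKstar : star K = K := by
      rw [hK, star_smul, star_sub, star_star, star_mul', hstar2, Complex.star_def,
        Complex.conj_I]
      rw [show (2 : ℂ)⁻¹ * -Complex.I = -((2:ℂ)⁻¹ * Complex.I) by ring]
      rw [neg_smul, ← smul_neg, neg_sub]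
    -- the polynomial family
    set B : Fin n → Matrix (Fin s) (Fin s) (Polynomial ℂ) :=
      fun i => if i = jj then H0.map Polynomial.C + (Polynomial.X : Polynomial ℂ) • K.map Polynomial.C
        else (A i).map Polynomial.C with hB
    set p : Polynomial ℂ := Matrix.trace (ev B g) with hp
    have keyeval : ∀ t : ℂ,
        Polynomial.aeval t p
          = Matrix.trace (ev (fun i => if i = jj then H0 + t • K else A i) g) := by
      intro t
      have h1 : (Polynomial.aeval t : Polynomial ℂ →ₐ[ℂ] ℂ) p
          = Matrix.trace ((AlgHom.mapMatrix (Polynomial.aeval t : Polynomial ℂ →ₐ[ℂ] ℂ))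
              (ev B g)) := by
        rw [hp]
        exact (trace_map ((Polynomial.aeval t : Polynomial ℂ →ₐ[ℂ] ℂ) : Polynomial ℂ →+* ℂ)
          (ev B g)).symm
      rw [h1]
      have h2 : (AlgHom.mapMatrix (Polynomial.aeval t : Polynomial ℂ →ₐ[ℂ] ℂ)) (ev B g)
          = ev (fun i => (AlgHom.mapMatrix (Polynomial.aeval t : Polynomial ℂ →ₐ[ℂ] ℂ)) (B i)) g := by
        rw [← AlgHom.comp_apply, ev_comp]
      have h3 : (fun i => (AlgHom.mapMatrix (Polynomial.aeval t : Polynomial ℂ →ₐ[ℂ] ℂ)) (B i))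
          = (fun i => if i = jj then H0 + t • K else A i) := by
        funext i
        by_cases hij : i = jj
        · subst hij
          simp only [hB, if_pos rfl, eq_self_iff_true, if_true]
          ext a b
          simp [Matrix.map_apply, Matrix.add_apply, Matrix.smul_apply, smul_eq_mul,
            AlgHom.mapMatrix_apply]
          ring
        · simp only [hB, if_neg hij]
          ext a b
          simp [Matrix.map_apply, AlgHom.mapMatrix_apply]
      rw [h2, h3]
    have hroot : ∀ r : ℝ, Polynomial.aeval ((r : ℂ)) p = 0 := by
      intro r
      rw [keyeval]
      refine ih s hs _ (fun i hji => ?_)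
      by_cases hij : i = jj
      · subst hij
        simp only [if_pos rfl, eq_self_iff_true, if_true, star_add, hH0star, star_smul, hKstar,
          Complex.star_def, Complex.conj_ofReal]
      · simp only [if_neg hij]
        refine hA i ?_
        have : (i : ℕ) ≠ j := fun hc => hij (Fin.ext hc)
        omega
    have hp0 : p = 0 := by
      apply Polynomial.eq_zero_of_infinite_isRoot
      apply Set.infinite_of_injective_forall_mem (f := fun r : ℝ => (r : ℂ))
        (hi := Complex.ofReal_injective)
      intro r
      have := hroot r
      simpa [Polynomial.IsRoot, Polynomial.aeval_def, Polynomial.eval₂_eq_eval_map] using this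
    have hfinal := keyeval Complex.I
    rw [hp0] at hfinal
    simp only [map_zero] at hfinal
    have hAeq : (fun i => if i = jj then H0 + Complex.I • K else A i) = A := by
      funext i
      by_cases hij : i = jj
      · subst hij
        simp only [if_pos rfl, eq_self_iff_true, if_true]
        ext a b
        simp only [hH0, hK, Matrix.add_apply, Matrix.smul_apply, Matrix.sub_apply,
          Matrix.star_apply, Matrix.conjTranspose_apply, smul_eq_mul]
        have hI : Complex.I * Complex.I = -1 := Complex.I_mul_I
        linear_combination ((2 : ℂ)⁻¹ * (star (M b a) - M a b)) * hI
      · simp [if_neg hij]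
    rw [hAeq] at hfinal
    exact hfinal.symm


section Words

open scoped Classical

/-- trace of an evaluation, as a sum over the support. -/
lemma trace_ev {s : ℕ} {R : Type} [CommRing R] [Algebra ℂ R]
    (A : Fin n → Matrix (Fin s) (Fin s) R) (g : MonoidAlgebra ℂ (FreeMonoid (Fin n))) :
    (ev A g).trace = g.coeff.sum fun w a => a • (FreeMonoid.lift A w).trace := by
  rw [ev, MonoidAlgebra.lift_apply, Finsupp.sum, Finsupp.sum, Matrix.trace_sum]
  exact Finset.sum_congr rfl fun w _ => Matrix.trace_smul _ _

/-- The cyclic edge matrices attached to a labelling `c` of the `d`-cycle. -/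
noncomputable def Emat {d : ℕ} [NeZero d] (c : Fin d → Fin n) : Fin n → Matrix (Fin d) (Fin d) ℂ :=
  fun i => Matrix.of fun a b => if i = c a ∧ b = a + 1 then 1 else 0

/-- the word `v` matches the labelling `c` starting at `a`. -/
def Match {d : ℕ} [NeZero d] (c : Fin d → Fin n) (a : Fin d) (v : List (Fin n)) : Prop :=
  ∀ m : ℕ, ∀ hm : m < v.length, v.get ⟨m, hm⟩ = c (a + (m : Fin d))

lemma match_nil {d : ℕ} [NeZero d] (c : Fin d → Fin n) (a : Fin d) : Match c a [] :=
  fun m hm => absurd hm (Nat.not_lt_zero m)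

lemma match_cons {d : ℕ} [NeZero d] (c : Fin d → Fin n) (a : Fin d) (x : Fin n)
    (v : List (Fin n)) : Match c a (x :: v) ↔ x = c a ∧ Match c (a + 1) v := by
  constructor
  · intro h
    refine ⟨?_, ?_⟩
    · have := h 0 (Nat.succ_pos _)
      simpa using this
    · intro m hm
      have := h (m + 1) (Nat.succ_lt_succ hm)
      simp only [List.get_cons_succ] at this
      rw [this]
      congr 1
      push_cast
      ring
  · rintro ⟨h0, h1⟩ m hm
    cases m with
    | zero => simpa using h0
    | succ m =>
      have := h1 m (Nat.lt_of_succ_lt_succ hm)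
      simp only [List.get_cons_succ]
      rw [this]
      congr 1
      push_cast
      ring

lemma prodE {d : ℕ} [NeZero d] (c : Fin d → Fin n) :
    ∀ (v : List (Fin n)) (a b : Fin d),
      ((v.map (Emat c)).prod) a b
        = if b = a + (v.length : Fin d) ∧ Match c a v then 1 else 0
  | [], a, b => by
    simp only [List.map_nil, List.prod_nil, Matrix.one_apply, List.length_nil,
      Nat.cast_zero, add_zero, match_nil, and_true]
    exact if_congr eq_comm rfl rfl
  | x :: v, a, b => by
    rw [List.map_cons, List.prod_cons, Matrix.mul_apply]
    have step : ∀ cc : Fin d, Emat c x a cc * ((v.map (Emat c)).prod) cc b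
        = if cc = a + 1 then
            (if x = c a then 1 else 0) * ((v.map (Emat c)).prod) cc b else 0 := by
      intro cc
      by_cases h1 : cc = a + 1 <;> by_cases h2 : x = c a <;>
        simp [Emat, h1, h2]
    rw [Finset.sum_congr rfl (fun cc _ => step cc), Finset.sum_ite_eq' Finset.univ (a + 1)]
    rw [if_pos (Finset.mem_univ _), prodE c v (a + 1) b]
    have harith : a + ((x :: v).length : Fin d) = (a + 1) + (v.length : Fin d) := by
      simp only [List.length_cons]
      push_cast
      ring
    rw [harith, match_cons]
    by_cases h2 : x = c a <;> by_cases hb : b = a + 1 + (v.length : Fin d) <;>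
      by_cases hm : Match c (a + 1) v <;> simp [h2, hb, hm]

lemma trace_prodE {d : ℕ} [NeZero d] (c : Fin d → Fin n) (v : List (Fin n))
    (hv : v.length = d) :
    ((v.map (Emat c)).prod).trace = ∑ a : Fin d, (if Match c a v then (1 : ℂ) else 0) := by
  rw [Matrix.trace]
  refine Finset.sum_congr rfl fun a _ => ?_
  rw [Matrix.diag_apply, prodE]
  have : a + ((v.length : ℕ) : Fin d) = a := by
    rw [hv, Fin.natCast_self, add_zero]
  rw [this]
  exact if_congr (and_iff_right rfl) rfl rfl

lemma match_iff_rotate (l : List (Fin n)) [NeZero l.length] (a : Fin l.length)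
    (v : List (Fin n)) (hv : v.length = l.length) :
    Match l.get a v ↔ v = l.rotate a.val := by
  have harith : ∀ m : ℕ, (a + ((m : ℕ) : Fin l.length)).val = (m + a.val) % l.length := by
    intro m
    simp only [Fin.add_def, Fin.val_natCast]
    rw [Nat.add_mod_mod, Nat.add_comm]
  constructor
  · intro h
    apply List.ext_get (by rw [hv, List.length_rotate])
    intro m h1 h2
    rw [List.get_rotate, h m h1]
    congr 1
    exact Fin.ext (harith m)
  · intro h
    subst h
    intro m hm
    rw [List.get_rotate]
    congr 1
    exact (Fin.ext (harith m)).symm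

lemma prod_smul_map {d : ℕ} (Em : Fin n → Matrix (Fin d) (Fin d) ℂ) :
    ∀ v : List (Fin n),
      (v.map (fun i => (Polynomial.X : Polynomial ℂ) • (Em i).map Polynomial.C)).prod
        = (Polynomial.X ^ v.length : Polynomial ℂ) • ((v.map Em).prod).map Polynomial.C
  | [] => by
    simp [Matrix.map_one Polynomial.C Polynomial.C_0 Polynomial.C_1]
  | x :: v => by
    rw [List.map_cons, List.prod_cons, prod_smul_map Em v, List.map_cons, List.prod_cons]
    rw [smul_mul_assoc, mul_smul_comm, smul_smul, ← Matrix.map_mul, List.length_cons,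
      ← pow_succ']

end Words

theorem sums_vanish (g : MonoidAlgebra ℂ (FreeMonoid (Fin n)))
    (H : ∀ s : ℕ, 1 ≤ s → ∀ A : Fin n → Matrix (Fin s) (Fin s) ℂ,
      Matrix.trace (ev A g) = 0) :
    g.coeff (FreeMonoid.ofList []) = 0 ∧
    ∀ l : List (Fin n), l ≠ [] →
      ∑ k ∈ Finset.range l.length, g.coeff (FreeMonoid.ofList (l.rotate k)) = 0 := by
  constructor
  · have h := H 1 le_rfl (fun _ => 0)
    rw [trace_ev] at h
    rw [Finsupp.sum_eq_single (FreeMonoid.ofList ([] : List (Fin n))) ?hz ?hz0] at h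
    case hz =>
      intro w hw0 hw
      have h2 : FreeMonoid.lift (fun _ : Fin n => (0 : Matrix (Fin 1) (Fin 1) ℂ)) w = 0 := by
        rw [FreeMonoid.lift_apply]
        rcases hlw : FreeMonoid.toList w with _ | ⟨x, t⟩
        · exact absurd (by rw [← FreeMonoid.ofList_toList w, hlw]) hw
        · simp
      rw [h2, Matrix.trace_zero, smul_zero]
    case hz0 => simp
    have h1 : FreeMonoid.lift (fun _ : Fin n => (0 : Matrix (Fin 1) (Fin 1) ℂ))
        (FreeMonoid.ofList []) = 1 := by
      rw [FreeMonoid.lift_apply]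
      rfl
    rw [h1, Matrix.trace_one] at h
    simpa using h
  · intro l hl
    haveI : NeZero l.length := ⟨fun h0 => hl (List.length_eq_zero_iff.1 h0)⟩
    classical
    set Em := Emat (l.get) with hEm
    set B : Fin n → Matrix (Fin l.length) (Fin l.length) (Polynomial ℂ) :=
      fun i => (Polynomial.X : Polynomial ℂ) • (Em i).map Polynomial.C with hB
    set p : Polynomial ℂ := (ev B g).trace with hp
    have heval : ∀ t : ℂ, Polynomial.aeval t p = ((ev (fun i => t • Em i) g)).trace := by
      intro t
      have h1 : (Polynomial.aeval t : Polynomial ℂ →ₐ[ℂ] ℂ) p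
          = Matrix.trace ((AlgHom.mapMatrix (Polynomial.aeval t : Polynomial ℂ →ₐ[ℂ] ℂ))
              (ev B g)) := by
        rw [hp]
        exact (trace_map ((Polynomial.aeval t : Polynomial ℂ →ₐ[ℂ] ℂ) : Polynomial ℂ →+* ℂ)
          (ev B g)).symm
      rw [h1, ← AlgHom.comp_apply, ev_comp]
      have h4 : (fun i => (AlgHom.mapMatrix (Polynomial.aeval t : Polynomial ℂ →ₐ[ℂ] ℂ)) (B i))
          = fun i => t • Em i := by
        funext i
        ext a b
        simp [hB, Matrix.map_apply, Matrix.smul_apply, smul_eq_mul, AlgHom.mapMatrix_apply]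
        ring
      rw [h4]
    have hp0 : p = 0 := by
      apply Polynomial.eq_zero_of_infinite_isRoot
      apply Set.infinite_of_injective_forall_mem (f := fun t : ℂ => t)
        (hi := Function.injective_id)
      intro t
      have h2 := H l.length (Nat.one_le_iff_ne_zero.2 (NeZero.ne _)) (fun i => t • Em i)
      have h3 := heval t
      rw [h2] at h3
      simpa [Polynomial.IsRoot, Polynomial.aeval_def, Polynomial.eval₂_eq_eval_map] using h3
    have hco : p.coeff l.length
        = ∑ k ∈ Finset.range l.length, g.coeff (FreeMonoid.ofList (l.rotate k)) := by
      rw [hp, trace_ev, Finsupp.sum, Polynomial.finset_sum_coeff]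
      have hterm : ∀ w ∈ g.coeff.support,
          ((g.coeff w) • (FreeMonoid.lift B w).trace).coeff l.length
            = ∑ a : Fin l.length,
                g.coeff w * (if FreeMonoid.toList w = l.rotate a.val then 1 else 0) := by
        intro w _
        rw [FreeMonoid.lift_apply]
        rw [show (FreeMonoid.toList w).map B = (FreeMonoid.toList w).map
          (fun i => (Polynomial.X : Polynomial ℂ) • (Em i).map Polynomial.C) from rfl]
        rw [prod_smul_map, Matrix.trace_smul, trace_map (Polynomial.C : ℂ →+* Polynomial ℂ),
          smul_eq_mul, mul_comm ((Polynomial.X : Polynomial ℂ) ^ _) (Polynomial.C _),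
          Polynomial.coeff_smul, Polynomial.coeff_C_mul_X_pow, smul_eq_mul]
        by_cases hlen : l.length = (FreeMonoid.toList w).length
        · rw [if_pos hlen, trace_prodE l.get _ hlen.symm, Finset.mul_sum]
          refine Finset.sum_congr rfl fun a _ => ?_
          congr 1
          exact if_congr (match_iff_rotate l a _ hlen.symm) rfl rfl
        · rw [if_neg hlen, mul_zero]
          symm
          refine Finset.sum_eq_zero fun a _ => ?_
          rw [if_neg, mul_zero]
          intro hc
          exact hlen (by rw [hc, List.length_rotate])
      rw [Finset.sum_congr rfl hterm, Finset.sum_comm]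
      have hinner : ∀ a : Fin l.length,
          (∑ w ∈ g.coeff.support,
            g.coeff w * (if FreeMonoid.toList w = l.rotate a.val then 1 else 0))
            = g.coeff (FreeMonoid.ofList (l.rotate a.val)) := by
        intro a
        have hterm2 : ∀ w ∈ g.coeff.support,
            g.coeff w * (if FreeMonoid.toList w = l.rotate a.val then 1 else 0)
              = if w = FreeMonoid.ofList (l.rotate a.val) then g.coeff w else 0 := by
          intro w _
          by_cases hw : FreeMonoid.toList w = l.rotate a.val
          · rw [if_pos hw, mul_one, if_pos]
            rw [← FreeMonoid.ofList_toList w, hw]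
          · rw [if_neg hw, mul_zero, if_neg]
            intro hc
            exact hw (by rw [hc, FreeMonoid.toList_ofList])
        rw [Finset.sum_congr rfl hterm2, Finset.sum_ite_eq' g.coeff.support]
        by_cases hmem : FreeMonoid.ofList (l.rotate a.val) ∈ g.coeff.support
        · rw [if_pos hmem]
        · rw [if_neg hmem]
          exact (Finsupp.notMem_support_iff.1 hmem).symm
      rw [Finset.sum_congr rfl (fun a _ => hinner a)]
      rw [← Fin.sum_univ_eq_sum_range (fun k => g.coeff (FreeMonoid.ofList (l.rotate k)))]
    rw [hp0] at hco
    simpa using hco.symm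

end Stmt15

/-- A noncommutative complex polynomial `f` is cyclically equivalent to `0` (i.e. lies in
the ℂ-linear span of commutators) if and only if its trace vanishes at every tuple of
self-adjoint complex matrices of every size `s ≥ 1`. -/
theorem stmt_15 {n : ℕ} (f : FreeAlgebra ℂ (Fin n)) :
    f ∈ Submodule.span ℂ {x : FreeAlgebra ℂ (Fin n) | ∃ p q, x = p * q - q * p}
    ↔ ∀ s : ℕ, 1 ≤ s → ∀ A : Fin n → Matrix (Fin s) (Fin s) ℂ,
        (∀ i, star (A i) = A i) →
        Matrix.trace ((FreeAlgebra.lift ℂ A) f) = 0 := by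
  constructor
  · intro hf s hs A hA
    induction hf using Submodule.span_induction with
    | mem x hx =>
      obtain ⟨p, q, rfl⟩ := hx
      simp only [map_sub, _root_.map_mul, Matrix.trace_sub]
      rw [Matrix.trace_mul_comm, sub_self]
    | zero => simp
    | add x y _ _ hx hy => simp [hx, hy]
    | smul c x _ hx => simp [hx]
  · intro H
    set e := (FreeAlgebra.equivMonoidAlgebraFreeMonoid (R := ℂ) (X := Fin n)) with he
    set g := e f with hg
    have H' : ∀ s : ℕ, 1 ≤ s → ∀ A : Fin n → Matrix (Fin s) (Fin s) ℂ,
        (∀ i, star (A i) = A i) → Matrix.trace (Stmt15.ev A g) = 0 := by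
      intro s hs A hA
      rw [hg, Stmt15.ev_bridge]
      exact H s hs A hA
    obtain ⟨h0, hR⟩ := Stmt15.sums_vanish g (Stmt15.herm_to_all g H')
    have hgmem := Stmt15.mem_span_comm g h0 hR
    have hf : f = e.symm g := by rw [hg]; simp
    rw [hf]
    clear_value g
    clear hf hg H' H h0 hR
    induction hgmem using Submodule.span_induction with
    | mem x hx =>
      obtain ⟨p, q, rfl⟩ := hx
      exact Submodule.subset_span ⟨e.symm p, e.symm q, by simp [_root_.map_mul]⟩
    | zero => simp
    | add x y _ _ hx hy => rw [map_add]; exact Submodule.add_mem _ hx hy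
    | smul c x _ hx => rw [_root_.map_smul]; exact Submodule.smul_mem _ c hx
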